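/- Let G be a red-blue edge-colored graph that contains distinct vertices x₀,x₁,x₂,x₃,x₄,x₅ with the edge x₀x₁ colored red and the path x₁x₂x₃x₄x₅ colored blue, distinct vertices v₀,v₁,v₂,v₃,v₄ disjoint from {x₀,…,x₅} with the path v₀v₁v₄v₃ colored blue and the path v₁v₂v₃ colored red, and two further colored edges x₁v₂ and x₅v₃ (each colored red or blue). Then G contains either a red path on 4 vertices or a blue path on 10 vertices. -/
import Mathlib


open SimpleGraph

/-- `H` is contained as a (not necessarily induced) subgraph of `G`,
i.e. `G` contains a copy of `H`. -/
def ContainsCopy {α V : Type*} (H : SimpleGraph α) (G : SimpleGraph V) : Prop :=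
  ∃ f : α → V, Function.Injective f ∧ ∀ ⦃a b⦄, H.Adj a b → G.Adj (f a) (f b)

lemma copyP4 {V : Type*} {G : SimpleGraph V} {a b c d : V}
    (hab : a ≠ b) (hac : a ≠ c) (had : a ≠ d) (hbc : b ≠ c) (hbd : b ≠ d) (hcd : c ≠ d)
    (h1 : G.Adj a b) (h2 : G.Adj b c) (h3 : G.Adj c d) :
    ContainsCopy (SimpleGraph.pathGraph 4) G := by
  refine ⟨![a,b,c,d], ?_, ?_⟩
  · intro i j h
    fin_cases i <;> fin_cases j <;> simp_all
  · intro i j h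
    rw [pathGraph_adj] at h
    fin_cases i <;> fin_cases j <;>
      simp_all <;> first | exact h1.symm | exact h2.symm | exact h3.symm

lemma copyP10 {V : Type*} {G : SimpleGraph V} {l : List V} (hl : l.length = 10)
    (hnd : l.Nodup)
    (hadj : ∀ i : Fin 9, G.Adj (l.get (i.castSucc.cast hl.symm)) (l.get (i.succ.cast hl.symm))) :
    ContainsCopy (SimpleGraph.pathGraph 10) G := by
  refine ⟨fun i => l.get (i.cast hl.symm), ?_, ?_⟩
  · intro i j h
    have := List.Nodup.get_inj_iff hnd |>.mp h
    exact Fin.ext (by simpa using congrArg Fin.val this)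
  · intro i j h
    rw [pathGraph_adj] at h
    rcases h with h | h
    · have : i.val < 9 := by omega
      have := hadj ⟨i.val, this⟩
      convert this using 2 <;> apply Fin.ext <;> simp <;> omega
    · have : j.val < 9 := by omega
      have := (hadj ⟨j.val, this⟩).symm
      convert this using 2 <;> apply Fin.ext <;> simp <;> omega

/-- Let `G` be a red-blue edge-colored graph (red edges `R`, blue edges `B`) containing
distinct vertices `x₀,…,x₅` with `x₀x₁` red and the path `x₁x₂x₃x₄x₅` blue, distinct
vertices `v₀,…,v₄` disjoint from `{x₀,…,x₅}` with the path `v₀v₁v₄v₃` blue and the path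
`v₁v₂v₃` red, together with colored edges `x₁v₂` and `x₅v₃` (each red or blue).
Then `G` contains a red `P₄` or a blue `P₁₀`. -/
theorem G6_and_G7_give_blue_P10 (V : Type*) (R B : SimpleGraph V) (hdisj : Disjoint R B)
    (x₀ x₁ x₂ x₃ x₄ x₅ v₀ v₁ v₂ v₃ v₄ : V)
    (hnodup : ([x₀, x₁, x₂, x₃, x₄, x₅, v₀, v₁, v₂, v₃, v₄] : List V).Nodup)
    (hred : R.Adj x₀ x₁)
    (hb₁ : B.Adj x₁ x₂) (hb₂ : B.Adj x₂ x₃) (hb₃ : B.Adj x₃ x₄) (hb₄ : B.Adj x₄ x₅)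
    (hb₅ : B.Adj v₀ v₁) (hb₆ : B.Adj v₁ v₄) (hb₇ : B.Adj v₄ v₃)
    (hr₁ : R.Adj v₁ v₂) (hr₂ : R.Adj v₂ v₃)
    (e₁ : R.Adj x₁ v₂ ∨ B.Adj x₁ v₂) (e₂ : R.Adj x₅ v₃ ∨ B.Adj x₅ v₃) :
    ContainsCopy (SimpleGraph.pathGraph 4) R ∨ ContainsCopy (SimpleGraph.pathGraph 10) B := by
  simp only [List.nodup_cons, List.mem_cons, List.not_mem_nil, or_false, not_or,
    List.mem_singleton, List.nodup_nil, and_true, not_false_eq_true] at hnodup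
  obtain ⟨⟨h01,h02,h03,h04,h05,h0v0,h0v1,h0v2,h0v3,h0v4⟩,
    ⟨h12,h13,h14,h15,h1v0,h1v1,h1v2,h1v3,h1v4⟩,
    ⟨h23,h24,h25,h2v0,h2v1,h2v2,h2v3,h2v4⟩,
    ⟨h34,h35,h3v0,h3v1,h3v2,h3v3,h3v4⟩,
    ⟨h45,h4v0,h4v1,h4v2,h4v3,h4v4⟩,
    ⟨h5v0,h5v1,h5v2,h5v3,h5v4⟩,
    ⟨hv01,hv02,hv03,hv04⟩,⟨hv12,hv13,hv14⟩,⟨hv23,hv24⟩,hv34⟩ := hnodup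
  rcases e₁ with e₁ | e₁
  · exact Or.inl (copyP4 h01 h0v2 h0v3 h1v2 h1v3 hv23 hred e₁ hr₂)
  rcases e₂ with e₂ | e₂
  · exact Or.inl (copyP4 h5v3 h5v2 h5v1 (Ne.symm hv23) (Ne.symm hv13) (Ne.symm hv12)
      e₂ hr₂.symm hr₁.symm)
  refine Or.inr (copyP10 (l := [v₂,x₁,x₂,x₃,x₄,x₅,v₃,v₄,v₁,v₀]) rfl ?_ ?_)
  · simp only [List.nodup_cons, List.mem_cons, List.not_mem_nil, or_false, not_or,
      List.mem_singleton, List.nodup_nil, and_true, not_false_eq_true]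
    exact ⟨⟨Ne.symm h1v2, Ne.symm h2v2, Ne.symm h3v2, Ne.symm h4v2, Ne.symm h5v2,
        hv23, hv24, Ne.symm hv12, Ne.symm hv02⟩,
      ⟨h12,h13,h14,h15,h1v3,h1v4,h1v1,h1v0⟩,
      ⟨h23,h24,h25,h2v3,h2v4,h2v1,h2v0⟩,
      ⟨h34,h35,h3v3,h3v4,h3v1,h3v0⟩,
      ⟨h45,h4v3,h4v4,h4v1,h4v0⟩,
      ⟨h5v3,h5v4,h5v1,h5v0⟩,
      ⟨hv34, Ne.symm hv13, Ne.symm hv03⟩,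
      ⟨Ne.symm hv14, Ne.symm hv04⟩,
      Ne.symm hv01⟩
  · intro i
    fin_cases i <;> simp <;>
      first
        | exact e₁.symm | exact hb₁ | exact hb₂ | exact hb₃ | exact hb₄
        | exact e₂ | exact hb₇.symm | exact hb₆.symm | exact hb₅.symm
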